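/- Let ε ∈ (0,1/3), let δ ≤ ε, let s be a positive integer, and let α_1,...,α_s > 0 and κ ≥ 0 satisfy κ ≤ δ·α_j for every j. Then for every real x: x^2·∏_{j=1}^s (α_j x^2 + κ) ≤ (∏_{j=1}^s α_j)·((1−ε)^s x^2 + (1+3δ)^s x^{2s+2}). -/
import Mathlib

open scoped BigOperators

theorem stmt_17 (ε δ : ℝ) (hε : ε ∈ Set.Ioo (0 : ℝ) (1 / 3)) (hδ0 : 0 ≤ δ) (hδε : δ ≤ ε)
    (s : ℕ) (hs : 0 < s) (α : Fin s → ℝ) (hα : ∀ j, 0 < α j)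
    (κ : ℝ) (hκ0 : 0 ≤ κ) (hκ : ∀ j, κ ≤ δ * α j) (x : ℝ) :
    x ^ 2 * ∏ j, (α j * x ^ 2 + κ)
      ≤ (∏ j, α j) * ((1 - ε) ^ s * x ^ 2 + (1 + 3 * δ) ^ s * x ^ (2 * s + 2)) := by
  obtain ⟨hε0, hε13⟩ := hε
  have hαprod : 0 < ∏ j, α j := Finset.prod_pos fun j _ => hα j
  have hx2 : (0:ℝ) ≤ x ^ 2 := sq_nonneg x
  have hxe : 0 ≤ x ^ (2 * s + 2) := by
    have h2 : 2 * s + 2 = 2 * (s + 1) := by ring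
    rw [h2, pow_mul]; positivity
  have hterm : ∀ j, 0 ≤ α j * x ^ 2 + κ := fun j => by nlinarith [hα j]
  rcases le_or_gt (x ^ 2) (1 - 2 * ε) with h | h
  · have hb : ∏ j, (α j * x ^ 2 + κ) ≤ ∏ j, ((1 - ε) * α j) := by
      apply Finset.prod_le_prod (fun j _ => hterm j)
      intro j _
      nlinarith [hα j, hκ j]
    calc x ^ 2 * ∏ j, (α j * x ^ 2 + κ) ≤ x ^ 2 * ∏ j, ((1 - ε) * α j) :=
          mul_le_mul_of_nonneg_left hb hx2
      _ = (∏ j, α j) * ((1 - ε) ^ s * x ^ 2) := by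
          rw [Finset.prod_mul_distrib, Finset.prod_const, Finset.card_univ, Fintype.card_fin]
          ring
      _ ≤ _ := by
          apply mul_le_mul_of_nonneg_left _ hαprod.le
          have : 0 ≤ (1 + 3 * δ) ^ s * x ^ (2 * s + 2) := by positivity
          linarith
  · have hb : ∏ j, (α j * x ^ 2 + κ) ≤ ∏ j, ((1 + 3 * δ) * (α j * x ^ 2)) := by
      apply Finset.prod_le_prod (fun j _ => hterm j)
      intro j _
      nlinarith [hα j, hκ j, hδ0]
    calc x ^ 2 * ∏ j, (α j * x ^ 2 + κ)
        ≤ x ^ 2 * ∏ j, ((1 + 3 * δ) * (α j * x ^ 2)) :=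
          mul_le_mul_of_nonneg_left hb hx2
      _ = (∏ j, α j) * ((1 + 3 * δ) ^ s * x ^ (2 * s + 2)) := by
          simp only [Finset.prod_mul_distrib, Finset.prod_const, Finset.card_univ,
            Fintype.card_fin]
          rw [← pow_mul]
          ring
      _ ≤ _ := by
          apply mul_le_mul_of_nonneg_left _ hαprod.le
          have h1e : (0:ℝ) < 1 - ε := by linarith
          have : 0 ≤ (1 - ε) ^ s * x ^ 2 := by positivity
          linarith
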